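/- arXiv:1405.4333 — 3 statements merged into one kernel-verified Lean document; each statement's English description precedes it below -/
import Mathlib

section
/- For i ≠ j, the principal ideal (z_j) of A_n^{Q,Γ}(K) is not contained in the principal ideal (z_i). -/
/-!  Multiparameter quantized Weyl algebras (Maltsiniotis).
Generators: `Sum.inl i ↦ xᵢ`, `Sum.inr i ↦ yᵢ`. -/

noncomputable section

open scoped BigOperators

/-- The free algebra generator corresponding to `xᵢ`. -/
def MQW.freeX (K : Type*) [CommRing K] (n : ℕ) (i : Fin n) :
    FreeAlgebra K (Fin n ⊕ Fin n) := FreeAlgebra.ι K (Sum.inl i)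

/-- The free algebra generator corresponding to `yᵢ`. -/
def MQW.freeY (K : Type*) [CommRing K] (n : ℕ) (i : Fin n) :
    FreeAlgebra K (Fin n ⊕ Fin n) := FreeAlgebra.ι K (Sum.inr i)

/-- The defining relations of the multiparameter quantized Weyl algebra
`A_n^{Q,Γ}(K)`. -/
inductive MQW.rel (K : Type*) [CommRing K] (n : ℕ) (Q : Fin n → K) (Γ : Fin n → Fin n → K) :
    FreeAlgebra K (Fin n ⊕ Fin n) → FreeAlgebra K (Fin n ⊕ Fin n) → Prop
  | yy (i j : Fin n) :
      MQW.rel K n Q Γ (MQW.freeY K n i * MQW.freeY K n j)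
        (algebraMap K _ (Γ i j) * (MQW.freeY K n j * MQW.freeY K n i))
  | xx (i j : Fin n) (h : i < j) :
      MQW.rel K n Q Γ (MQW.freeX K n i * MQW.freeX K n j)
        (algebraMap K _ (Q i * Γ i j) * (MQW.freeX K n j * MQW.freeX K n i))
  | xyLT (i j : Fin n) (h : i < j) :
      MQW.rel K n Q Γ (MQW.freeX K n i * MQW.freeY K n j)
        (algebraMap K _ (Γ j i) * (MQW.freeY K n j * MQW.freeX K n i))
  | xyGT (i j : Fin n) (h : j < i) :
      MQW.rel K n Q Γ (MQW.freeX K n i * MQW.freeY K n j)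
        (algebraMap K _ (Q j * Γ j i) * (MQW.freeY K n j * MQW.freeX K n i))
  | weyl (j : Fin n) :
      MQW.rel K n Q Γ (MQW.freeX K n j * MQW.freeY K n j)
        (algebraMap K _ (Q j) * (MQW.freeY K n j * MQW.freeX K n j) + 1 +
          ∑ k ∈ Finset.univ.filter (fun k : Fin n => k < j),
            algebraMap K _ (Q k - 1) * (MQW.freeY K n k * MQW.freeX K n k))

/-- The multiparameter quantized Weyl algebra `A_n^{Q,Γ}(K)`. -/
abbrev MQWeyl (K : Type*) [CommRing K] (n : ℕ) (Q : Fin n → K) (Γ : Fin n → Fin n → K) :=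
  RingQuot (MQW.rel K n Q Γ)

namespace MQW

variable (K : Type*) [CommRing K] (n : ℕ) (Q : Fin n → K) (Γ : Fin n → Fin n → K)

/-- The generator `xᵢ` of `A_n^{Q,Γ}(K)`. -/
def x (i : Fin n) : MQWeyl K n Q Γ := RingQuot.mkAlgHom K (MQW.rel K n Q Γ) (freeX K n i)

/-- The generator `yᵢ` of `A_n^{Q,Γ}(K)`. -/
def y (i : Fin n) : MQWeyl K n Q Γ := RingQuot.mkAlgHom K (MQW.rel K n Q Γ) (freeY K n i)

/-- `z m = 1 + ∑_{k=1}^{m} (q_k - 1) y_k x_k` (1-indexed count `m`; here `k`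
ranges over the 0-indexed positions `< m`).  In particular `z 0 = 1`. -/
def z (m : ℕ) : MQWeyl K n Q Γ :=
  1 + ∑ k ∈ Finset.univ.filter (fun k : Fin n => (k : ℕ) < m),
      algebraMap K _ (Q k - 1) * (y K n Q Γ k * x K n Q Γ k)

end MQW

/-- A two-sided ideal `P` of a (possibly noncommutative) ring is prime if it is proper
and whenever `a R b ⊆ P` one has `a ∈ P` or `b ∈ P`. -/
def TwoSidedIdeal.IsPrimeTS {R : Type*} [Ring R] (P : TwoSidedIdeal R) : Prop :=
  P ≠ ⊤ ∧ ∀ a b : R, (∀ r : R, a * r * b ∈ P) → a ∈ P ∨ b ∈ P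

/-! ### Auxiliary: an explicit weight representation of `A_n^{Q,Γ}(K)`

We construct, for a suitable sequence `lam : ℕ → K` with `lam 0 = 1`, a representation
of the quantized Weyl algebra on the `K`-vector space with basis indexed by `Fin n → ℤ`,
on which `z m` acts diagonally with eigenvalue `lam m * ∏_{l < m} (Q l)^(f l)`. -/

namespace MQWP
open Finset

variable {K : Type*} [Field K] {n : ℕ} (Q : Fin n → K) (Γ : Fin n → Fin n → K) (lam : ℕ → K)

/-- shift up at `l` -/
def up (f : Fin n → ℤ) (l : Fin n) : Fin n → ℤ := f + Pi.single l 1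
/-- shift down at `l` -/
def dn (f : Fin n → ℤ) (l : Fin n) : Fin n → ℤ := f - Pi.single l 1
/-- diagonal eigenvalue data -/
def g (k : Fin n) (m : ℤ) : K := (lam ((k : ℕ) + 1) * Q k ^ m - lam (k : ℕ)) / (Q k - 1)
/-- twist for `y` -/
def beta (k : Fin n) (f : Fin n → ℤ) : K :=
  ∏ l ∈ Finset.univ.filter (fun l : Fin n => l < k), Γ k l ^ (f l)
/-- twist for `x` -/
def tau (k : Fin n) (f : Fin n → ℤ) : K :=
  ∏ l ∈ Finset.univ.filter (fun l : Fin n => l < k), (Q l * Γ l k) ^ (f l)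
/-- product of powers of the `Q`'s -/
def Pn (m : ℕ) (f : Fin n → ℤ) : K :=
  ∏ l ∈ Finset.univ.filter (fun l : Fin n => (l : ℕ) < m), Q l ^ (f l)

lemma up_apply (f : Fin n → ℤ) (l l' : Fin n) :
    up f l l' = f l' + (if l' = l then 1 else 0) := by
  simp [up, Pi.single_apply]

lemma dn_apply (f : Fin n → ℤ) (l l' : Fin n) :
    dn f l l' = f l' - (if l' = l then 1 else 0) := by
  simp [dn, Pi.single_apply]

lemma up_apply_ne (f : Fin n → ℤ) {l l' : Fin n} (h : l' ≠ l) : up f l l' = f l' := by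
  simp [up, Pi.single_apply, h]
lemma dn_apply_ne (f : Fin n → ℤ) {l l' : Fin n} (h : l' ≠ l) : dn f l l' = f l' := by
  simp [dn, Pi.single_apply, h]
lemma up_apply_self (f : Fin n → ℤ) (l : Fin n) : up f l l = f l + 1 := by
  simp [up]
lemma up_dn (f : Fin n → ℤ) (l : Fin n) : dn (up f l) l = f := by simp [up, dn]
lemma dn_up (f : Fin n → ℤ) (l : Fin n) : up (dn f l) l = f := by simp [up, dn]
lemma up_dn_comm (f : Fin n → ℤ) (l l' : Fin n) : dn (up f l) l' = up (dn f l') l := by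
  simp only [up, dn]; abel
lemma up_comm (f : Fin n → ℤ) (l l' : Fin n) : up (up f l) l' = up (up f l') l := by
  simp only [up]; abel
lemma dn_comm (f : Fin n → ℤ) (l l' : Fin n) : dn (dn f l) l' = dn (dn f l') l := by
  simp only [dn]; abel

lemma prod_zpow_up (a : Fin n → K) (S : Finset (Fin n)) (h : ∀ l' ∈ S, a l' ≠ 0)
    (f : Fin n → ℤ) (l : Fin n) :
    ∏ l' ∈ S, a l' ^ (up f l l') =
      (∏ l' ∈ S, a l' ^ (f l')) * (if l ∈ S then a l else 1) := by
  have : ∀ l' ∈ S, a l' ^ (up f l l') =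
      a l' ^ (f l') * (if l' = l then a l' else 1) := by
    intro l' hl'
    rw [up_apply, zpow_add₀ (h l' hl')]
    congr 1
    split <;> simp
  rw [Finset.prod_congr rfl this, Finset.prod_mul_distrib, Finset.prod_ite_eq' S l a]

lemma prod_zpow_dn (a : Fin n → K) (S : Finset (Fin n)) (h : ∀ l' ∈ S, a l' ≠ 0)
    (f : Fin n → ℤ) (l : Fin n) :
    ∏ l' ∈ S, a l' ^ (dn f l l') =
      (∏ l' ∈ S, a l' ^ (f l')) * (if l ∈ S then (a l)⁻¹ else 1) := by
  have : ∀ l' ∈ S, a l' ^ (dn f l l') =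
      a l' ^ (f l') * (if l' = l then (a l')⁻¹ else 1) := by
    intro l' hl'
    rw [dn_apply, zpow_sub₀ (h l' hl'), div_eq_mul_inv]
    congr 1
    split <;> simp
  rw [Finset.prod_congr rfl this, Finset.prod_mul_distrib,
    Finset.prod_ite_eq' S l (fun l' => (a l')⁻¹)]

lemma gamma_ne (hΓ : ∀ a b, Γ a b * Γ b a = 1) (a b : Fin n) : Γ a b ≠ 0 :=
  left_ne_zero_of_mul_eq_one (hΓ a b)

lemma beta_up (hΓ : ∀ a b, Γ a b * Γ b a = 1) (k l : Fin n) (f : Fin n → ℤ) :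
    beta Γ k (up f l) = beta Γ k f * (if l < k then Γ k l else 1) := by
  rw [beta, prod_zpow_up _ _ (fun l' _ => gamma_ne Γ hΓ k l'), ← beta]
  congr 1
  simp only [Finset.mem_filter, Finset.mem_univ, true_and]

lemma beta_dn (hΓ : ∀ a b, Γ a b * Γ b a = 1) (k l : Fin n) (f : Fin n → ℤ) :
    beta Γ k (dn f l) = beta Γ k f * (if l < k then (Γ k l)⁻¹ else 1) := by
  rw [beta, prod_zpow_dn _ _ (fun l' _ => gamma_ne Γ hΓ k l'), ← beta]
  congr 1
  simp only [Finset.mem_filter, Finset.mem_univ, true_and]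

lemma tau_up (hQ0 : ∀ k, Q k ≠ 0) (hΓ : ∀ a b, Γ a b * Γ b a = 1) (k l : Fin n)
    (f : Fin n → ℤ) :
    tau Q Γ k (up f l) = tau Q Γ k f * (if l < k then Q l * Γ l k else 1) := by
  rw [tau, prod_zpow_up _ _ (fun l' _ => mul_ne_zero (hQ0 l') (gamma_ne Γ hΓ l' k)), ← tau]
  congr 1
  simp only [Finset.mem_filter, Finset.mem_univ, true_and]

lemma tau_dn (hQ0 : ∀ k, Q k ≠ 0) (hΓ : ∀ a b, Γ a b * Γ b a = 1) (k l : Fin n)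
    (f : Fin n → ℤ) :
    tau Q Γ k (dn f l) = tau Q Γ k f * (if l < k then (Q l * Γ l k)⁻¹ else 1) := by
  rw [tau, prod_zpow_dn _ _ (fun l' _ => mul_ne_zero (hQ0 l') (gamma_ne Γ hΓ l' k)), ← tau]
  congr 1
  simp only [Finset.mem_filter, Finset.mem_univ, true_and]

lemma filt_eq (k : Fin n) :
    Finset.univ.filter (fun l : Fin n => l < k) =
      Finset.univ.filter (fun l : Fin n => (l : ℕ) < (k : ℕ)) := by
  ext l
  simp only [Finset.mem_filter, Finset.mem_univ, true_and]
  exact Fin.lt_def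

lemma tau_mul_beta (hΓ : ∀ a b, Γ a b * Γ b a = 1) (k : Fin n) (f : Fin n → ℤ) :
    tau Q Γ k f * beta Γ k f = Pn Q (k : ℕ) f := by
  rw [tau, beta, ← Finset.prod_mul_distrib, Pn, ← filt_eq]
  refine Finset.prod_congr rfl fun l _ => ?_
  rw [← mul_zpow]
  congr 1
  rw [mul_assoc, hΓ l k, mul_one]

lemma Pn_zero (f : Fin n → ℤ) : Pn Q 0 f = 1 := by
  rw [Pn]
  convert Finset.prod_empty
  ext l; simp

lemma Pn_ones (m : ℕ) : Pn Q m (0 : Fin n → ℤ) = 1 := by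
  rw [Pn]
  simp

lemma Pn_succ (m : ℕ) (hm : m < n) (f : Fin n → ℤ) :
    Pn Q (m + 1) f = Pn Q m f * Q ⟨m, hm⟩ ^ (f ⟨m, hm⟩) := by
  rw [Pn, Pn, show Finset.univ.filter (fun l : Fin n => (l : ℕ) < m + 1)
      = insert ⟨m, hm⟩ (Finset.univ.filter (fun l : Fin n => (l : ℕ) < m)) by
    ext l
    simp only [Finset.mem_filter, Finset.mem_univ, true_and, Finset.mem_insert, Fin.ext_iff]
    omega]
  rw [Finset.prod_insert (by simp)]
  ring

lemma g_mul (hQ1 : ∀ k, Q k - 1 ≠ 0) (k : Fin n) (m : ℤ) :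
    (Q k - 1) * g Q lam k m = lam ((k : ℕ) + 1) * Q k ^ m - lam (k : ℕ) := by
  rw [g, mul_div_cancel₀ _ (hQ1 k)]

lemma g_rec (hQ1 : ∀ k, Q k - 1 ≠ 0) (hQ0 : ∀ k, Q k ≠ 0) (k : Fin n) (m : ℤ) :
    g Q lam k (m + 1) = Q k * g Q lam k m + lam (k : ℕ) := by
  apply mul_left_cancel₀ (hQ1 k)
  rw [g_mul Q lam hQ1, mul_add, ← mul_assoc, mul_comm (Q k - 1) (Q k), mul_assoc,
    g_mul Q lam hQ1, zpow_add₀ (hQ0 k), zpow_one]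
  ring

lemma sum_tel (hQ1 : ∀ k, Q k - 1 ≠ 0) (f : Fin n → ℤ) :
    ∀ m, m ≤ n →
      ∑ k ∈ Finset.univ.filter (fun k : Fin n => (k : ℕ) < m),
        (Q k - 1) * (g Q lam k (f k) * Pn Q (k : ℕ) f)
      = lam m * Pn Q m f - lam 0 := by
  intro m
  induction m with
  | zero =>
      intro _
      rw [Pn_zero]
      rw [show Finset.univ.filter (fun k : Fin n => (k : ℕ) < 0) = ∅ by ext l; simp]
      simp
  | succ m ih =>
      intro hm
      have hmn : m < n := hm
      rw [show Finset.univ.filter (fun k : Fin n => (k : ℕ) < m + 1)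
          = insert ⟨m, hmn⟩ (Finset.univ.filter (fun k : Fin n => (k : ℕ) < m)) by
        ext l
        simp only [Finset.mem_filter, Finset.mem_univ, true_and, Finset.mem_insert, Fin.ext_iff]
        omega]
      rw [Finset.sum_insert (by simp), ih (Nat.le_of_lt hmn), Pn_succ Q m hmn f]
      have hterm : (Q ⟨m, hmn⟩ - 1) *
            (g Q lam ⟨m, hmn⟩ (f ⟨m, hmn⟩) * Pn Q ((⟨m, hmn⟩ : Fin n) : ℕ) f)
          = (lam (m + 1) * Q ⟨m, hmn⟩ ^ (f ⟨m, hmn⟩) - lam m) * Pn Q m f := by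
        rw [← mul_assoc, g_mul Q lam hQ1]
      rw [hterm]
      ring

/-- The module of the representation. -/
abbrev V (K : Type*) [Field K] (n : ℕ) : Type _ := (Fin n → ℤ) →₀ K

/-- The operator representing `y k`. -/
def Yop (k : Fin n) : Module.End K (V K n) :=
  Finsupp.lsum K fun f => LinearMap.toSpanSingleton K _ (Finsupp.single (up f k) (beta Γ k f))

/-- The operator representing `x k`. -/
def Xop (k : Fin n) : Module.End K (V K n) :=
  Finsupp.lsum K fun f =>
    LinearMap.toSpanSingleton K _ (Finsupp.single (dn f k) (g Q lam k (f k) * tau Q Γ k f))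

lemma Yop_single (k : Fin n) (f : Fin n → ℤ) (c : K) :
    Yop Γ k (Finsupp.single f c) = Finsupp.single (up f k) (c * beta Γ k f) := by
  rw [Yop, Finsupp.lsum_single, LinearMap.toSpanSingleton_apply, Finsupp.smul_single,
    smul_eq_mul]

lemma Xop_single (k : Fin n) (f : Fin n → ℤ) (c : K) :
    Xop Q Γ lam k (Finsupp.single f c)
      = Finsupp.single (dn f k) (c * (g Q lam k (f k) * tau Q Γ k f)) := by
  rw [Xop, Finsupp.lsum_single, LinearMap.toSpanSingleton_apply, Finsupp.smul_single,
    smul_eq_mul]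

lemma rel_yy (hΓ : ∀ a b, Γ a b * Γ b a = 1) (hΓd : ∀ a, Γ a a = 1) (i j : Fin n) :
    Yop Γ i * Yop Γ j = algebraMap K _ (Γ i j) * (Yop Γ j * Yop Γ i) := by
  apply Finsupp.lhom_ext
  intro f c
  simp only [Module.End.mul_apply, Module.algebraMap_end_apply, Yop_single,
    Finsupp.smul_single, smul_eq_mul]
  rw [up_comm]
  congr 1
  rw [beta_up Γ hΓ, beta_up Γ hΓ]
  rcases lt_trichotomy i j with h | h | h
  · rw [if_neg (asymm h), if_pos h]
    linear_combination (-(c * beta Γ i f * beta Γ j f)) * hΓ i j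
  · subst h
    rw [if_neg (lt_irrefl i), hΓd i]
    ring
  · rw [if_pos h, if_neg (asymm h)]
    ring

lemma rel_xx (hQ0 : ∀ k, Q k ≠ 0) (hΓ : ∀ a b, Γ a b * Γ b a = 1) (i j : Fin n) (h : i < j) :
    Xop Q Γ lam i * Xop Q Γ lam j
      = algebraMap K _ (Q i) * algebraMap K _ (Γ i j) * (Xop Q Γ lam j * Xop Q Γ lam i) := by
  rw [← map_mul]
  apply Finsupp.lhom_ext
  intro f c
  simp only [Module.End.mul_apply, Module.algebraMap_end_apply, Xop_single,
    Finsupp.smul_single, smul_eq_mul]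
  rw [dn_comm]
  congr 1
  rw [dn_apply_ne _ (ne_of_lt h).symm, dn_apply_ne _ (ne_of_lt h),
    tau_dn Q Γ hQ0 hΓ, tau_dn Q Γ hQ0 hΓ, if_neg (asymm h), if_pos h]
  have h2 : Q i * Γ i j ≠ 0 := mul_ne_zero (hQ0 i) (gamma_ne Γ hΓ i j)
  field_simp
  have h3 := hQ0 i
  have h4 := gamma_ne Γ hΓ i j
  field_simp

lemma rel_xyLT (hQ0 : ∀ k, Q k ≠ 0) (hΓ : ∀ a b, Γ a b * Γ b a = 1) (i j : Fin n) (h : i < j) :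
    Xop Q Γ lam i * Yop Γ j
      = algebraMap K _ (Γ j i) * (Yop Γ j * Xop Q Γ lam i) := by
  apply Finsupp.lhom_ext
  intro f c
  simp only [Module.End.mul_apply, Module.algebraMap_end_apply, Xop_single, Yop_single,
    Finsupp.smul_single, smul_eq_mul]
  rw [up_dn_comm]
  congr 1
  rw [up_apply_ne _ (ne_of_lt h), tau_up Q Γ hQ0 hΓ, if_neg (asymm h),
    beta_dn Γ hΓ, if_pos h]
  have h2 : Γ j i ≠ 0 := gamma_ne Γ hΓ j i
  field_simp

lemma rel_xyGT (hQ0 : ∀ k, Q k ≠ 0) (hΓ : ∀ a b, Γ a b * Γ b a = 1) (i j : Fin n) (h : j < i) :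
    Xop Q Γ lam i * Yop Γ j
      = algebraMap K _ (Q j) * algebraMap K _ (Γ j i) * (Yop Γ j * Xop Q Γ lam i) := by
  rw [← map_mul]
  apply Finsupp.lhom_ext
  intro f c
  simp only [Module.End.mul_apply, Module.algebraMap_end_apply, Xop_single, Yop_single,
    Finsupp.smul_single, smul_eq_mul]
  rw [up_dn_comm]
  congr 1
  rw [up_apply_ne _ (ne_of_lt h).symm, tau_up Q Γ hQ0 hΓ, if_pos h,
    beta_dn Γ hΓ, if_neg (asymm h)]
  ring

lemma rel_weyl (hQ0 : ∀ k, Q k ≠ 0) (hΓ : ∀ a b, Γ a b * Γ b a = 1)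
    (hQ1 : ∀ k, Q k - 1 ≠ 0) (hlam0 : lam 0 = 1) (j : Fin n) :
    Xop Q Γ lam j * Yop Γ j
      = algebraMap K _ (Q j) * (Yop Γ j * Xop Q Γ lam j) + 1 +
        ∑ k ∈ Finset.univ.filter (fun k : Fin n => k < j),
          algebraMap K _ (Q k - 1) * (Yop Γ k * Xop Q Γ lam k) := by
  apply Finsupp.lhom_ext
  intro f c
  simp only [LinearMap.add_apply, LinearMap.sum_apply, Module.End.mul_apply,
    Module.algebraMap_end_apply, Module.End.one_apply, Yop_single, Xop_single,
    Finsupp.smul_single, smul_eq_mul, up_dn, dn_up, up_apply_self,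
    beta_dn Γ hΓ, tau_up Q Γ hQ0 hΓ, lt_self_iff_false, if_false, mul_one]
  have hsummand : ∀ k ∈ Finset.univ.filter (fun k : Fin n => k < j),
      Finsupp.single f ((Q k - 1) * (c * (g Q lam k (f k) * tau Q Γ k f) * beta Γ k f))
        = Finsupp.single f ((Q k - 1) * (c * (g Q lam k (f k) * Pn Q (k : ℕ) f))) := by
    intro k _
    congr 1
    rw [← tau_mul_beta Q Γ hΓ k f]
    ring
  rw [Finset.sum_congr rfl hsummand, ← Finsupp.single_finset_sum,
    ← Finsupp.single_add, ← Finsupp.single_add]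
  congr 1
  rw [filt_eq j]
  have h2 : ∑ k ∈ Finset.univ.filter (fun k : Fin n => (k : ℕ) < (j : ℕ)),
      (Q k - 1) * (c * (g Q lam k (f k) * Pn Q (k : ℕ) f))
      = c * ∑ k ∈ Finset.univ.filter (fun k : Fin n => (k : ℕ) < (j : ℕ)),
        (Q k - 1) * (g Q lam k (f k) * Pn Q (k : ℕ) f) := by
    rw [Finset.mul_sum]
    exact Finset.sum_congr rfl fun k _ => by ring
  rw [h2, sum_tel Q lam hQ1 f (j : ℕ) (le_of_lt j.isLt), hlam0, g_rec Q lam hQ1 hQ0]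
  linear_combination (c * lam (j : ℕ)) * (tau_mul_beta Q Γ hΓ j f)

/-- The representation of the quantized Weyl algebra. -/
def rep (hQ0 : ∀ k, Q k ≠ 0) (hΓ : ∀ a b, Γ a b * Γ b a = 1) (hΓd : ∀ a, Γ a a = 1)
    (hQ1 : ∀ k, Q k - 1 ≠ 0) (hlam0 : lam 0 = 1) :
    MQWeyl K n Q Γ →ₐ[K] Module.End K (V K n) :=
  RingQuot.liftAlgHom K
    ⟨FreeAlgebra.lift K (Sum.elim (fun k => Xop Q Γ lam k) (fun k => Yop Γ k)), by
      intro a b h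
      induction h with
      | yy i j =>
          simp only [MQW.freeX, MQW.freeY, map_mul, map_add, map_sum, map_one,
            AlgHom.commutes, FreeAlgebra.lift_ι_apply, Sum.elim_inl, Sum.elim_inr]
          exact rel_yy Γ hΓ hΓd i j
      | xx i j h =>
          simp only [MQW.freeX, MQW.freeY, map_mul, map_add, map_sum, map_one,
            AlgHom.commutes, FreeAlgebra.lift_ι_apply, Sum.elim_inl, Sum.elim_inr]
          exact rel_xx Q Γ lam hQ0 hΓ i j h
      | xyLT i j h =>
          simp only [MQW.freeX, MQW.freeY, map_mul, map_add, map_sum, map_one,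
            AlgHom.commutes, FreeAlgebra.lift_ι_apply, Sum.elim_inl, Sum.elim_inr]
          exact rel_xyLT Q Γ lam hQ0 hΓ i j h
      | xyGT i j h =>
          simp only [MQW.freeX, MQW.freeY, map_mul, map_add, map_sum, map_one,
            AlgHom.commutes, FreeAlgebra.lift_ι_apply, Sum.elim_inl, Sum.elim_inr]
          exact rel_xyGT Q Γ lam hQ0 hΓ i j h
      | weyl j =>
          simp only [MQW.freeX, MQW.freeY, map_mul, map_add, map_sum, map_one,
            AlgHom.commutes, FreeAlgebra.lift_ι_apply, Sum.elim_inl, Sum.elim_inr]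
          exact rel_weyl Q Γ lam hQ0 hΓ hQ1 hlam0 j⟩

variable {hQ0 : ∀ k, Q k ≠ 0} {hΓ : ∀ a b, Γ a b * Γ b a = 1} {hΓd : ∀ a, Γ a a = 1}
  {hQ1 : ∀ k, Q k - 1 ≠ 0} {hlam0 : lam 0 = 1}

lemma rep_x (hQ0 : ∀ k, Q k ≠ 0) (hΓ : ∀ a b, Γ a b * Γ b a = 1) (hΓd : ∀ a, Γ a a = 1)
    (hQ1 : ∀ k, Q k - 1 ≠ 0) (hlam0 : lam 0 = 1) (k : Fin n) :
    rep Q Γ lam hQ0 hΓ hΓd hQ1 hlam0 (MQW.x K n Q Γ k) = Xop Q Γ lam k := by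
  rw [MQW.x, rep, RingQuot.liftAlgHom_mkAlgHom_apply, MQW.freeX, FreeAlgebra.lift_ι_apply,
    Sum.elim_inl]

lemma rep_y (hQ0 : ∀ k, Q k ≠ 0) (hΓ : ∀ a b, Γ a b * Γ b a = 1) (hΓd : ∀ a, Γ a a = 1)
    (hQ1 : ∀ k, Q k - 1 ≠ 0) (hlam0 : lam 0 = 1) (k : Fin n) :
    rep Q Γ lam hQ0 hΓ hΓd hQ1 hlam0 (MQW.y K n Q Γ k) = Yop Γ k := by
  rw [MQW.y, rep, RingQuot.liftAlgHom_mkAlgHom_apply, MQW.freeY, FreeAlgebra.lift_ι_apply,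
    Sum.elim_inr]

lemma rep_z_single (hQ0 : ∀ k, Q k ≠ 0) (hΓ : ∀ a b, Γ a b * Γ b a = 1)
    (hΓd : ∀ a, Γ a a = 1) (hQ1 : ∀ k, Q k - 1 ≠ 0) (hlam0 : lam 0 = 1)
    (m : ℕ) (hm : m ≤ n) (f : Fin n → ℤ) (c : K) :
    rep Q Γ lam hQ0 hΓ hΓd hQ1 hlam0 (MQW.z K n Q Γ m) (Finsupp.single f c)
      = Finsupp.single f (c * (lam m * Pn Q m f)) := by
  rw [MQW.z]
  simp only [map_add, map_one, map_sum, map_mul, AlgHom.commutes,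
    rep_x Q Γ lam hQ0 hΓ hΓd hQ1 hlam0, rep_y Q Γ lam hQ0 hΓ hΓd hQ1 hlam0]
  simp only [LinearMap.add_apply, LinearMap.sum_apply, Module.End.mul_apply,
    Module.algebraMap_end_apply, Module.End.one_apply, Yop_single, Xop_single,
    Finsupp.smul_single, smul_eq_mul, dn_up, beta_dn Γ hΓ, lt_self_iff_false,
    if_false, mul_one]
  have hsummand : ∀ k ∈ Finset.univ.filter (fun k : Fin n => (k : ℕ) < m),
      Finsupp.single f ((Q k - 1) * (c * (g Q lam k (f k) * tau Q Γ k f) * beta Γ k f))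
        = Finsupp.single f (c * ((Q k - 1) * (g Q lam k (f k) * Pn Q (k : ℕ) f))) := by
    intro k _
    congr 1
    rw [← tau_mul_beta Q Γ hΓ k f]
    ring
  rw [Finset.sum_congr rfl hsummand, ← Finsupp.single_finset_sum, ← Finsupp.single_add]
  congr 1
  have h2 : ∑ k ∈ Finset.univ.filter (fun k : Fin n => (k : ℕ) < m),
      c * ((Q k - 1) * (g Q lam k (f k) * Pn Q (k : ℕ) f))
      = c * ∑ k ∈ Finset.univ.filter (fun k : Fin n => (k : ℕ) < m),
        (Q k - 1) * (g Q lam k (f k) * Pn Q (k : ℕ) f) := by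
    rw [Finset.mul_sum]
  rw [h2, sum_tel Q lam hQ1 f m hm, hlam0]
  ring

end MQWP

/-- for `i ≠ j`, the two-sided ideal `(z_j)` is not contained in `(z_i)`
(the parameters `q_i` being non-roots of unity, as in the setting of the paper). -/
theorem mqw_z_ideals_incomparable (K : Type*) [Field K] (n : ℕ) (Q : Fin n → K)
    (Γ : Fin n → Fin n → K) (hQ : ∀ i, Q i ≠ 0)
    (hq : ∀ (i : Fin n) (k : ℕ), k ≠ 0 → Q i ^ k ≠ 1)
    (hΓ : ∀ i j, Γ i j * Γ j i = 1) (hΓd : ∀ i, Γ i i = 1)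
    (i j : Fin n) (hij : i ≠ j) :
    ¬ (TwoSidedIdeal.span {MQW.z K n Q Γ ((j : ℕ) + 1)} ≤
        TwoSidedIdeal.span {MQW.z K n Q Γ ((i : ℕ) + 1)}) := by
  intro hle
  have hQ1 : ∀ k, Q k - 1 ≠ 0 := fun k =>
    sub_ne_zero.mpr (by simpa using hq k 1 one_ne_zero)
  set lam : ℕ → K := fun m => if m = (i : ℕ) + 1 then 0 else 1 with hlam
  have hlam0 : lam 0 = 1 := by simp [hlam]
  set φ := MQWP.rep Q Γ lam hQ hΓ hΓd hQ1 hlam0 with hφ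
  have hzi : φ (MQW.z K n Q Γ ((i : ℕ) + 1)) = 0 := by
    rw [hφ]
    apply Finsupp.lhom_ext
    intro f c
    rw [MQWP.rep_z_single Q Γ lam hQ hΓ hΓd hQ1 hlam0 ((i : ℕ) + 1) i.isLt f c]
    simp [hlam]
  have hmem : MQW.z K n Q Γ ((j : ℕ) + 1) ∈ TwoSidedIdeal.ker φ := by
    have h1 : MQW.z K n Q Γ ((j : ℕ) + 1) ∈
        TwoSidedIdeal.span {MQW.z K n Q Γ ((i : ℕ) + 1)} :=
      hle (TwoSidedIdeal.subset_span rfl)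
    exact TwoSidedIdeal.mem_span_iff.mp h1 (TwoSidedIdeal.ker φ)
      (by
        intro x hx
        rcases hx with rfl
        exact (TwoSidedIdeal.mem_ker φ).mpr hzi)
  have hzj : φ (MQW.z K n Q Γ ((j : ℕ) + 1)) = 0 := (TwoSidedIdeal.mem_ker φ).mp hmem
  have h3 : MQWP.rep Q Γ lam hQ hΓ hΓd hQ1 hlam0 (MQW.z K n Q Γ ((j : ℕ) + 1))
      (Finsupp.single 0 1) = 0 := by
    rw [← hφ, hzj]
    rfl
  rw [MQWP.rep_z_single Q Γ lam hQ hΓ hΓd hQ1 hlam0 ((j : ℕ) + 1) j.isLt 0 1,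
    MQWP.Pn_ones] at h3
  have hlamj : lam ((j : ℕ) + 1) = 1 := by
    rw [hlam]
    simp only [ite_eq_right_iff]
    intro h
    exact absurd (Fin.val_injective (by omega)) hij.symm
  rw [hlamj] at h3
  simp at h3
end
end

section
/- Let q, q' ∈ K* with q not a root of unity. The quantized Weyl algebras A_1^q(K) and A_1^{q'}(K) are isomorphic as K-algebras if and only if q' = q or q' = q^{-1}. -/
/-!  Multiparameter quantized Weyl algebras (Maltsiniotis).
Generators: `Sum.inl i ↦ xᵢ`, `Sum.inr i ↦ yᵢ`. -/

noncomputable section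

open scoped BigOperators

namespace QWtest

variable {K : Type*} [Field K]

def mono (g : ℤ → K) (d : ℤ) : Module.End K (ℤ →₀ K) :=
  Finsupp.lift (ℤ →₀ K) K ℤ (fun n => Finsupp.single (n + d) (g n))

@[simp] lemma mono_single (g : ℤ → K) (d : ℤ) (n : ℤ) (c : K) :
    mono g d (Finsupp.single n c) = Finsupp.single (n + d) (g n * c) := by
  rw [mono, Finsupp.lift_apply, Finsupp.sum_single_index]
  · rw [Finsupp.smul_single, smul_eq_mul, mul_comm]
  · simp

lemma endExt {S T : Module.End K (ℤ →₀ K)}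
    (h : ∀ (n : ℤ) (c : K), S (Finsupp.single n c) = T (Finsupp.single n c)) : S = T :=
  Finsupp.lhom_ext' fun n => LinearMap.ext fun c => by
    simpa using h n c

/-- zpow of a unit, coerced. -/
def qz (u : Kˣ) (m : ℤ) : K := ((u ^ m : Kˣ) : K)

@[simp] lemma qz_add (u : Kˣ) (m n : ℤ) : qz u (m + n) = qz u m * qz u n := by
  simp [qz, zpow_add]

@[simp] lemma qz_zero (u : Kˣ) : qz u 0 = 1 := by simp [qz]

lemma qz_ne_zero (u : Kˣ) (m : ℤ) : qz u m ≠ 0 := Units.ne_zero _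

open scoped Classical in
/-- `[n]_u` : the `u`-integer, defined for all `n : ℤ`, also sensible at `u = 1`. -/
def fU (u : Kˣ) (n : ℤ) : K :=
  if (u : K) = 1 then (n : K) else (qz u n - 1) / ((u : K) - 1)

lemma fU_succ (u : Kˣ) (n : ℤ) : fU u (n + 1) = (u : K) * fU u n + 1 := by
  unfold fU
  split_ifs with h
  · rw [h]; push_cast; ring
  · have h1 : (u : K) - 1 ≠ 0 := sub_ne_zero.mpr h
    field_simp
    have : qz u 1 = (u : K) := by simp [qz]
    rw [qz_add, this]; ring

@[simp] lemma fU_zero (u : Kˣ) : fU u 0 = 0 := by simp [fU]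

@[simp] lemma fU_one (u : Kˣ) : fU u 1 = 1 := by
  unfold fU
  split_ifs with h
  · simp
  · rw [div_eq_one_iff_eq (sub_ne_zero.mpr h)]
    simp [qz]


def VE : Module.End K (ℤ →₀ K) := mono (fun _ => (1 : K)) 1

def XE (u : Kˣ) : Module.End K (ℤ →₀ K) := mono (fun n => fU u n) (-1)

def eE (u : Kˣ) (d k : ℤ) : Module.End K (ℤ →₀ K) := mono (fun n => qz u (n * k)) d

section Rep

variable (u : Kˣ)

def repAux : FreeAlgebra K (Fin 1 ⊕ Fin 1) →ₐ[K] Module.End K (ℤ →₀ K) :=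
  FreeAlgebra.lift K (Sum.elim (fun _ => XE u) (fun _ => VE))

lemma repAux_rel : ∀ ⦃a b⦄, MQW.rel K 1 (fun _ => (u : K)) (fun _ _ => (1:K)) a b →
    repAux u a = repAux u b := by
  intro a b r
  induction r with
  | yy i j => simp [MQW.freeY, repAux, map_one]
  | xx i j h => exact absurd (Subsingleton.elim i j ▸ h) (lt_irrefl j)
  | xyLT i j h => exact absurd (Subsingleton.elim i j ▸ h) (lt_irrefl j)
  | xyGT i j h => exact absurd (Subsingleton.elim j i ▸ h) (lt_irrefl i)
  | weyl j =>
      have hempty : (Finset.univ.filter (fun k : Fin 1 => k < j)) = ∅ := by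
        have : j = 0 := Subsingleton.elim _ _
        simp [this, Fin.not_lt_zero]
      simp only [MQW.freeX, MQW.freeY, map_mul, map_add, map_one, hempty,
        Finset.sum_empty, map_zero, add_zero, repAux, FreeAlgebra.lift_ι_apply,
        Sum.elim_inl, Sum.elim_inr, AlgHom.commutes]
      refine endExt fun n c => ?_
      simp only [Module.End.mul_apply, LinearMap.add_apply, Module.algebraMap_end_apply,
        Module.End.one_apply, VE, XE, mono_single, one_mul]
      rw [show n + 1 + -1 = n from by omega, show n + -1 + 1 = n from by omega,
        Finsupp.smul_single, ← Finsupp.single_add]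
      congr 1
      rw [fU_succ, smul_eq_mul]
      ring

def rep : MQWeyl K 1 (fun _ => (u : K)) (fun _ _ => (1:K)) →ₐ[K] Module.End K (ℤ →₀ K) :=
  RingQuot.liftAlgHom K ⟨repAux u, repAux_rel u⟩

@[simp] lemma rep_x : rep u (MQW.x K 1 (fun _ => (u : K)) (fun _ _ => (1:K)) 0) = XE u := by
  simp [rep, MQW.x, MQW.freeX, RingQuot.liftAlgHom_mkAlgHom_apply, repAux,
    FreeAlgebra.lift_ι_apply]

@[simp] lemma rep_y : rep u (MQW.y K 1 (fun _ => (u : K)) (fun _ _ => (1:K)) 0) = VE := by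
  simp [rep, MQW.y, MQW.freeY, RingQuot.liftAlgHom_mkAlgHom_apply, repAux,
    FreeAlgebra.lift_ι_apply]

end Rep


section AlgSide

variable (p : K)

local notation "Ap" => MQWeyl K 1 (fun _ => p) (fun _ _ => (1:K))

def xA : Ap := MQW.x K 1 (fun _ => p) (fun _ _ => (1:K)) 0
def yA : Ap := MQW.y K 1 (fun _ => p) (fun _ _ => (1:K)) 0
def zA : Ap := 1 + (p - 1) • (yA p * xA p)

lemma rel1 : xA p * yA p = p • (yA p * xA p) + 1 := by
  have h := RingQuot.mkAlgHom_rel K (MQW.rel.weyl (K := K) (n := 1)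
    (Q := fun _ => p) (Γ := fun _ _ => (1:K)) 0)
  have hempty : (Finset.univ.filter (fun k : Fin 1 => k < (0 : Fin 1))) = ∅ := by
    simp
  rw [hempty] at h
  simp only [map_mul, map_add, map_one, Finset.sum_empty, map_zero, add_zero,
    AlgHom.commutes] at h
  rw [xA, yA, MQW.x, MQW.y, h, ← Algebra.smul_def]

lemma xz_rel : xA p * zA p = p • (zA p * xA p) := by
  have h := rel1 p
  simp only [zA, mul_add, add_mul, mul_one, one_mul, mul_smul_comm, smul_mul_assoc, smul_add]
  rw [show xA p * (yA p * xA p) = (xA p * yA p) * xA p by rw [mul_assoc], h]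
  simp only [add_mul, smul_mul_assoc, one_mul, mul_assoc]
  module

end AlgSide

section NonzeroGens

variable (u : Kˣ)

lemma xA_ne_zero : xA (u : K) ≠ 0 := by
  intro h
  have := congrArg (rep u) h
  rw [map_zero] at this
  rw [xA] at this
  have h2 := congrArg (fun T : Module.End K (ℤ →₀ K) => T (Finsupp.single 1 1)) this
  simp only [rep_x, XE, mono_single, LinearMap.zero_apply, fU_one, one_mul] at h2
  exact one_ne_zero (Finsupp.single_eq_zero.mp h2)

lemma zA_ne_zero : zA (u : K) ≠ 0 := by
  intro h
  have := congrArg (rep u) h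
  rw [map_zero] at this
  have h2 := congrArg (fun T : Module.End K (ℤ →₀ K) => T (Finsupp.single 0 1)) this
  simp only [zA, xA, yA, map_add, map_one, map_smul, map_mul, rep_x, rep_y] at h2
  simp only [LinearMap.add_apply, Module.End.one_apply, LinearMap.smul_apply,
    Module.End.mul_apply, XE, VE, mono_single, fU_zero, zero_mul, LinearMap.zero_apply,
    Finsupp.single_zero, map_zero, smul_zero, add_zero] at h2
  exact one_ne_zero (Finsupp.single_eq_zero.mp h2)

end NonzeroGens


section Spanning

variable (p : K)

local notation "Ap" => MQWeyl K 1 (fun _ => p) (fun _ _ => (1:K))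

def TT : Submodule K Ap :=
  Submodule.span K (Set.range fun ab : ℕ × ℕ => yA p ^ ab.1 * xA p ^ ab.2)

lemma mon_mem (a b : ℕ) : yA p ^ a * xA p ^ b ∈ TT p :=
  Submodule.subset_span ⟨(a, b), rfl⟩

lemma y_mul_mem {t : Ap} (ht : t ∈ TT p) : yA p * t ∈ TT p := by
  induction ht using Submodule.span_induction with
  | mem w hw =>
      obtain ⟨⟨a, b⟩, rfl⟩ := hw
      rw [← mul_assoc, ← pow_succ']
      exact mon_mem p (a + 1) b
  | zero => simpa using (TT p).zero_mem
  | add s t _ _ hs ht => rw [mul_add]; exact (TT p).add_mem hs ht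
  | smul c t _ ht => rw [mul_smul_comm]; exact (TT p).smul_mem c ht

lemma x_mul_mon (a b : ℕ) : xA p * (yA p ^ a * xA p ^ b) ∈ TT p := by
  induction a with
  | zero =>
      rw [pow_zero, one_mul, ← pow_succ']
      exact Submodule.subset_span ⟨(0, b + 1), by simp⟩
  | succ a ih =>
      have : xA p * (yA p ^ (a+1) * xA p ^ b)
          = (xA p * yA p) * (yA p ^ a * xA p ^ b) := by
        rw [pow_succ']; noncomm_ring
      rw [this, rel1, add_mul, one_mul, smul_mul_assoc, mul_assoc]
      exact (TT p).add_mem ((TT p).smul_mem _ (y_mul_mem p ih)) (mon_mem p a b)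

lemma x_mul_mem {t : Ap} (ht : t ∈ TT p) : xA p * t ∈ TT p := by
  induction ht using Submodule.span_induction with
  | mem w hw => obtain ⟨⟨a, b⟩, rfl⟩ := hw; exact x_mul_mon p a b
  | zero => simpa using (TT p).zero_mem
  | add s t _ _ hs ht => rw [mul_add]; exact (TT p).add_mem hs ht
  | smul c t _ ht => rw [mul_smul_comm]; exact (TT p).smul_mem c ht

lemma xpow_mul_mem (b : ℕ) {t : Ap} (ht : t ∈ TT p) : xA p ^ b * t ∈ TT p := by
  induction b with
  | zero => simpa using ht
  | succ b ih =>
      rw [pow_succ', mul_assoc]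
      exact x_mul_mem p ih

lemma mon_mul_mem (a b : ℕ) {t : Ap} (ht : t ∈ TT p) : (yA p ^ a * xA p ^ b) * t ∈ TT p := by
  induction a with
  | zero => rw [pow_zero, one_mul]; exact xpow_mul_mem p b ht
  | succ a ih =>
      have : (yA p ^ (a+1) * xA p ^ b) * t = yA p * ((yA p ^ a * xA p ^ b) * t) := by
        rw [pow_succ']; noncomm_ring
      rw [this]
      exact y_mul_mem p ih

lemma mul_mem_TT {s t : Ap} (hs : s ∈ TT p) (ht : t ∈ TT p) : s * t ∈ TT p := by
  induction hs using Submodule.span_induction with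
  | mem w hw => obtain ⟨⟨a, b⟩, rfl⟩ := hw; exact mon_mul_mem p a b ht
  | zero => simpa using (TT p).zero_mem
  | add s s' _ _ hs hs' => rw [add_mul]; exact (TT p).add_mem hs hs'
  | smul c s _ hs => rw [smul_mul_assoc]; exact (TT p).smul_mem c hs

lemma TT_top (a : Ap) : a ∈ TT p := by
  obtain ⟨w, rfl⟩ := RingQuot.mkAlgHom_surjective K (MQW.rel K 1 (fun _ => p) (fun _ _ => (1:K))) a
  induction w using FreeAlgebra.induction with
  | grade0 r =>
      rw [AlgHom.commutes, Algebra.algebraMap_eq_smul_one]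
      exact (TT p).smul_mem r (by simpa using mon_mem p 0 0)
  | grade1 s =>
      rcases s with i | i
      · have : i = 0 := Subsingleton.elim _ _
        subst this
        have : RingQuot.mkAlgHom K _ (FreeAlgebra.ι K (Sum.inl (0 : Fin 1))) = xA p := rfl
        rw [this]
        simpa using mon_mem p 0 1
      · have : i = 0 := Subsingleton.elim _ _
        subst this
        have : RingQuot.mkAlgHom K _ (FreeAlgebra.ι K (Sum.inr (0 : Fin 1))) = yA p := rfl
        rw [this]
        simpa using mon_mem p 1 0
  | mul w1 w2 h1 h2 => rw [map_mul]; exact mul_mem_TT p h1 h2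
  | add w1 w2 h1 h2 => rw [map_add]; exact (TT p).add_mem h1 h2

lemma exists_finsupp (a : Ap) : ∃ c : (ℕ × ℕ) →₀ K,
    a = c.sum fun ab s => s • (yA p ^ ab.1 * xA p ^ ab.2) := by
  have := TT_top p a
  rw [TT, Finsupp.mem_span_range_iff_exists_finsupp] at this
  obtain ⟨c, hc⟩ := this
  exact ⟨c, hc.symm⟩

end Spanning


section Inj

variable (u : Kˣ)

def gProd (b : ℕ) (m : ℤ) : K := ∏ i ∈ Finset.range b, fU u (m - i)

lemma XE_pow (b : ℕ) (m : ℤ) (c : K) :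
    ((XE u) ^ b) (Finsupp.single m c) = Finsupp.single (m - b) (gProd u b m * c) := by
  induction b generalizing c with
  | zero => simp [gProd]
  | succ b ih =>
      rw [pow_succ', Module.End.mul_apply, ih, XE, mono_single]
      congr 1
      · push_cast; ring
      · rw [gProd, gProd, Finset.prod_range_succ]
        push_cast
        ring
  
lemma VE_pow (a : ℕ) (m : ℤ) (c : K) :
    ((VE : Module.End K (ℤ →₀ K)) ^ a) (Finsupp.single m c) = Finsupp.single (m + a) c := by
  induction a generalizing m with
  | zero => simp
  | succ a ih =>
      have hV : (VE : Module.End K (ℤ →₀ K)) (Finsupp.single (m + a) c)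
          = Finsupp.single (m + a + 1) c := by rw [VE, mono_single, one_mul]
      rw [pow_succ', Module.End.mul_apply, ih, hV]
      congr 1
      push_cast; ring

lemma rep_xA : rep u (xA (u : K)) = XE u := rep_x u

lemma rep_yA : rep u (yA (u : K)) = VE := rep_y u

lemma rep_mon (a b : ℕ) :
    rep u (yA (u : K) ^ a * xA (u : K) ^ b) = VE ^ a * (XE u) ^ b := by
  rw [map_mul, map_pow, map_pow, rep_xA, rep_yA]

lemma u_ne_one (unroot : ∀ m : ℤ, m ≠ 0 → u ^ m ≠ 1) : (u : K) ≠ 1 := by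
  intro h
  exact unroot 1 one_ne_zero (by ext; simpa using h)

lemma fU_ne_zero (unroot : ∀ m : ℤ, m ≠ 0 → u ^ m ≠ 1) {n : ℤ} (hn : n ≠ 0) : fU u n ≠ 0 := by
  rw [fU, if_neg (u_ne_one u unroot)]
  refine div_ne_zero ?_ (sub_ne_zero.mpr (u_ne_one u unroot))
  rw [sub_ne_zero]
  intro h
  exact unroot n hn (by ext; simpa [qz] using h)

lemma gProd_ne_zero (unroot : ∀ m : ℤ, m ≠ 0 → u ^ m ≠ 1) (b : ℕ) : gProd u b (b : ℤ) ≠ 0 := by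
  rw [gProd, Finset.prod_ne_zero_iff]
  intro i hi
  rw [Finset.mem_range] at hi
  exact fU_ne_zero u unroot (by omega)

lemma rep_ker (unroot : ∀ m : ℤ, m ≠ 0 → u ^ m ≠ 1) {a : MQWeyl K 1 (fun _ => (u : K)) (fun _ _ => (1:K))}
    (ha : rep u a = 0) : a = 0 := by
  obtain ⟨c, rfl⟩ := exists_finsupp (u : K) a
  suffices hc : ∀ (N : ℕ) (A : ℕ), c (A, N) = 0 by
    rw [Finsupp.sum]
    apply Finset.sum_eq_zero
    intro ab hab
    rw [show c ab = 0 from hc ab.2 ab.1, zero_smul]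
  have key : ∀ (m t : ℤ),
      (∑ ab ∈ c.support, if (m : ℤ) - ab.2 + ab.1 = t then c ab * gProd u ab.2 m else 0) = 0 := by
    intro m t
    have h1 : rep u (c.sum fun ab s => s • (yA (u:K) ^ ab.1 * xA (u:K) ^ ab.2))
        = ∑ ab ∈ c.support, c ab • (VE ^ ab.1 * (XE u) ^ ab.2) := by
      rw [Finsupp.sum, map_sum]
      exact Finset.sum_congr rfl fun ab _ => by rw [map_smul, rep_mon]
    rw [ha] at h1
    have h2 := congrArg (fun T : Module.End K (ℤ →₀ K) => T (Finsupp.single m 1) t) h1.symm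
    simp only [LinearMap.zero_apply, Finsupp.coe_zero, Pi.zero_apply, LinearMap.sum_apply,
      LinearMap.smul_apply, Finsupp.coe_finset_sum, Finset.sum_apply, Finsupp.coe_smul,
      Pi.smul_apply] at h2
    refine Eq.trans (Finset.sum_congr rfl fun ab _ => ?_) h2
    have h3 : ((VE ^ ab.1 * XE u ^ ab.2 : Module.End K (ℤ →₀ K))) (Finsupp.single m (1:K))
        = Finsupp.single (m - ab.2 + ab.1) (gProd u ab.2 m) := by
      rw [Module.End.mul_apply, XE_pow, VE_pow, mul_one]
    rw [h3, Finsupp.single_apply, smul_eq_mul, mul_ite, mul_zero]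
  intro N
  induction N using Nat.strong_induction_on with
  | _ N IH =>
    intro A₀
    by_cases hmem : ((A₀, N) : ℕ × ℕ) ∈ c.support
    · have hk := key (N : ℤ) (N - N + A₀ : ℤ)
      have hsingle : (∑ ab ∈ c.support,
          if ((N : ℤ)) - ab.2 + ab.1 = ((N : ℤ) - N + A₀) then c ab * gProd u ab.2 N else 0)
          = c (A₀, N) * gProd u N (N : ℤ) := by
        rw [Finset.sum_eq_single ((A₀, N) : ℕ × ℕ)]
        · rw [if_pos (by push_cast; ring)]
        · intro ab _ hne
          by_cases hcond : ((N : ℤ)) - ab.2 + ab.1 = ((N : ℤ) - N + A₀)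
          · rw [if_pos hcond]
            rcases lt_trichotomy ab.2 N with h | h | h
            · rw [show c ab = 0 from by rw [show ab = (ab.1, ab.2) from rfl]; exact IH ab.2 h ab.1,
                zero_mul]
            · exfalso
              apply hne
              have : ab.1 = A₀ := by omega
              rw [show ab = (ab.1, ab.2) from rfl, this, h]
            · rw [show gProd u ab.2 (N : ℤ) = 0 from ?_, mul_zero]
              refine Finset.prod_eq_zero (Finset.mem_range.mpr h) ?_
              rw [show ((N : ℤ)) - (N : ℕ) = 0 from by push_cast; ring, fU_zero]
          · rw [if_neg hcond]
        · intro h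
          exact absurd hmem h
      rw [hsingle] at hk
      exact (mul_eq_zero.mp hk).resolve_right (gProd_ne_zero u unroot N)
    · exact Finsupp.notMem_support_iff.mp hmem

lemma rep_inj (unroot : ∀ m : ℤ, m ≠ 0 → u ^ m ≠ 1) : Function.Injective (rep u) := by
  refine (injective_iff_map_eq_zero _).mpr fun a ha => rep_ker u unroot ha

end Inj


section PhiSec

variable (u : Kˣ)

@[simp] lemma eE_single (d k n : ℤ) (c : K) :
    eE u d k (Finsupp.single n c) = Finsupp.single (n + d) (qz u (n * k) * c) := by
  rw [eE, mono_single]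

lemma eE_mul (d k d' k' : ℤ) :
    eE u d k * eE u d' k' = qz u (d' * k) • eE u (d + d') (k + k') := by
  refine endExt fun n c => ?_
  simp only [Module.End.mul_apply, LinearMap.smul_apply, eE_single, Finsupp.smul_single,
    smul_eq_mul]
  rw [show n + d' + d = n + (d + d') from by ring]
  congr 1
  rw [show (n + d') * k = d' * k + n * k from by ring,
    show n * (k + k') = n * k + n * k' from by ring, qz_add, qz_add]
  ring

def Phi : ((ℤ × ℤ) →₀ K) →ₗ[K] Module.End K (ℤ →₀ K) :=
  Finsupp.lift _ K _ (fun dk => eE u dk.1 dk.2)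

@[simp] lemma Phi_single (dk : ℤ × ℤ) (s : K) :
    Phi u (Finsupp.single dk s) = s • eE u dk.1 dk.2 := by
  rw [Phi, Finsupp.lift_apply, Finsupp.sum_single_index]
  simp

def starAux (m : ℤ × ℤ) : ((ℤ × ℤ) →₀ K) →ₗ[K] ((ℤ × ℤ) →₀ K) :=
  Finsupp.lift _ K _ (fun n => Finsupp.single (m + n) (qz u (n.1 * m.2)))

def starL : ((ℤ × ℤ) →₀ K) →ₗ[K] ((ℤ × ℤ) →₀ K) →ₗ[K] ((ℤ × ℤ) →₀ K) :=
  Finsupp.lift _ K _ (fun m => starAux u m)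

@[simp] lemma starAux_single (m n : ℤ × ℤ) (t : K) :
    starAux u m (Finsupp.single n t) = Finsupp.single (m + n) (qz u (n.1 * m.2) * t) := by
  rw [starAux, Finsupp.lift_apply, Finsupp.sum_single_index]
  · rw [Finsupp.smul_single, smul_eq_mul, mul_comm]
  · simp

@[simp] lemma starL_single (m : ℤ × ℤ) (s : K) :
    starL u (Finsupp.single m s) = s • starAux u m := by
  rw [starL, Finsupp.lift_apply, Finsupp.sum_single_index]
  simp

lemma Phi_mul (F G : (ℤ × ℤ) →₀ K) :
    Phi u F * Phi u G = Phi u (starL u F G) := by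
  induction F using Finsupp.induction_linear with
  | zero => simp
  | add f g hf hg => rw [map_add, add_mul, hf, hg, map_add, LinearMap.add_apply, map_add]
  | single m s =>
    induction G using Finsupp.induction_linear with
    | zero => simp
    | add f g hf hg => rw [map_add, mul_add, hf, hg, map_add, map_add]
    | single n t =>
        rw [Phi_single, Phi_single, starL_single, LinearMap.smul_apply, starAux_single,
          map_smul, Phi_single, smul_mul_assoc, mul_smul_comm, eE_mul]
        rw [smul_smul, smul_smul, smul_smul]
        congr 1
        ring

end PhiSec


section PhiInj

variable (u : Kˣ)

/-- The character `n ↦ u^{kn}` as a monoid hom. -/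
def chi (k : ℤ) : Multiplicative ℤ →* K :=
  (Units.coeHom K).comp (zpowersHom Kˣ (u ^ k))

lemma chi_apply (k : ℤ) (g : Multiplicative ℤ) :
    chi u k g = qz u (k * g.toAdd) := by
  simp [chi, zpowersHom_apply, qz, zpow_mul]

lemma zpow_eq_one_iff (unroot : ∀ m : ℤ, m ≠ 0 → u ^ m ≠ 1) {m : ℤ} (h : u ^ m = 1) :
    m = 0 := by
  by_contra hm
  exact unroot m hm h

lemma chi_injective (unroot : ∀ m : ℤ, m ≠ 0 → u ^ m ≠ 1) :
    Function.Injective (chi u) := by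
  intro k k' h
  have h1 : chi u k (Multiplicative.ofAdd 1) = chi u k' (Multiplicative.ofAdd 1) := by rw [h]
  rw [chi_apply, chi_apply] at h1
  have h2 : u ^ k = u ^ k' := by
    ext; simpa [qz] using h1
  have h3 : u ^ (k - k') = 1 := by
    rw [zpow_sub, h2, mul_inv_cancel]
  have := zpow_eq_one_iff u unroot h3
  omega

lemma chi_li (unroot : ∀ m : ℤ, m ≠ 0 → u ^ m ≠ 1) :
    LinearIndependent K (fun k : ℤ => (chi u k : Multiplicative ℤ → K)) :=
  (linearIndependent_monoidHom (Multiplicative ℤ) K).comp (chi u) (chi_injective u unroot)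

lemma Phi_ker (unroot : ∀ m : ℤ, m ≠ 0 → u ^ m ≠ 1) {F : (ℤ × ℤ) →₀ K}
    (hF : Phi u F = 0) : F = 0 := by
  ext dk
  obtain ⟨d, k⟩ := dk
  -- the support slice at first coordinate `d`
  set s : Finset ℤ := (F.support.filter (fun dk : ℤ × ℤ => dk.1 = d)).image Prod.snd with hs
  -- main computation: for every n, the coefficient of `single (n+d)` in `Phi u F (single n 1)`
  have hcoeff : ∀ n : ℤ, (∑ j ∈ s, F (d, j) * qz u (n * j)) = 0 := by
    intro n
    have h0 : (Phi u F) (Finsupp.single n 1) = 0 := by rw [hF]; rfl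
    have h1 : (Phi u F) (Finsupp.single n 1)
        = ∑ dk ∈ F.support, Finsupp.single (n + dk.1) (F dk * qz u (n * dk.2)) := by
      rw [Phi, Finsupp.lift_apply, Finsupp.sum]
      rw [LinearMap.coe_sum, Finset.sum_apply]
      refine Finset.sum_congr rfl fun dk _ => ?_
      rw [LinearMap.smul_apply, eE_single, mul_one, Finsupp.smul_single, smul_eq_mul]
    have h2 := congrArg (fun f : ℤ →₀ K => f (n + d)) (h1.symm.trans h0)
    simp only [Finsupp.coe_finset_sum, Finset.sum_apply, Finsupp.coe_zero, Pi.zero_apply,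
      Finsupp.single_apply] at h2
    rw [← h2]
    rw [Finset.sum_image]
    · rw [← Finset.sum_filter_add_sum_filter_not F.support (fun dk : ℤ × ℤ => dk.1 = d)]
      have hright : ∑ dk ∈ F.support.filter (fun dk : ℤ × ℤ => ¬dk.1 = d),
          (if n + dk.1 = n + d then F dk * qz u (n * dk.2) else 0) = 0 := by
        refine Finset.sum_eq_zero fun dk hdk => ?_
        rw [Finset.mem_filter] at hdk
        rw [if_neg (by omega)]
      rw [hright, add_zero]
      refine Finset.sum_congr rfl fun dk hdk => ?_
      rw [Finset.mem_filter] at hdk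
      have : dk = (d, dk.2) := by
        rw [show dk = (dk.1, dk.2) from rfl, hdk.2]
      rw [if_pos (by omega), ← this]
    · intro a ha b hb hab
      rw [Finset.mem_coe, Finset.mem_filter] at ha hb
      ext
      · rw [ha.2, hb.2]
      · exact hab
  -- turn it into a statement about characters
  have hfun : (∑ j ∈ s, F (d, j) • (chi u j : Multiplicative ℤ → K)) = 0 := by
    funext g
    simp only [Finset.sum_apply, Pi.smul_apply, Pi.zero_apply, smul_eq_mul]
    rw [← hcoeff g.toAdd]
    refine Finset.sum_congr rfl fun j _ => ?_
    rw [chi_apply, mul_comm j g.toAdd]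
  by_cases hmem : (d, k) ∈ F.support
  · have hk : k ∈ s := by
      rw [hs]
      exact Finset.mem_image.mpr ⟨(d, k), Finset.mem_filter.mpr ⟨hmem, rfl⟩, rfl⟩
    have := linearIndependent_iff'.mp (chi_li u unroot) s (fun j => F (d, j)) hfun k hk
    simpa using this
  · simpa using Finsupp.notMem_support_iff.mp hmem

end PhiInj


section RangeSec

variable (u : Kˣ)

lemma one_in_range : (1 : Module.End K (ℤ →₀ K)) ∈ LinearMap.range (Phi u) := by
  refine ⟨Finsupp.single ((0:ℤ), (0:ℤ)) 1, ?_⟩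
  rw [Phi_single, one_smul]
  refine (endExt fun n c => ?_).symm
  rw [Module.End.one_apply, eE_single, mul_zero, qz_zero, one_mul, add_zero]

lemma VE_in_range : (VE : Module.End K (ℤ →₀ K)) ∈ LinearMap.range (Phi u) := by
  refine ⟨Finsupp.single ((1:ℤ), (0:ℤ)) 1, ?_⟩
  rw [Phi_single, one_smul]
  refine (endExt fun n c => ?_).symm
  rw [VE, mono_single, eE_single, mul_zero, qz_zero]

lemma XE_in_range (hu1 : (u : K) ≠ 1) : XE u ∈ LinearMap.range (Phi u) := by
  refine ⟨((u : K) - 1)⁻¹ • (Finsupp.single ((-1:ℤ), (1:ℤ)) 1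
    - Finsupp.single ((-1:ℤ), (0:ℤ)) 1), ?_⟩
  rw [map_smul, map_sub, Phi_single, Phi_single, one_smul, one_smul]
  refine endExt fun n c => ?_
  simp only [LinearMap.smul_apply, LinearMap.sub_apply, eE_single, mul_one, mul_zero,
    XE, mono_single, qz_zero, one_mul]
  rw [← Finsupp.single_sub, Finsupp.smul_single]
  congr 1
  rw [fU, if_neg hu1, smul_eq_mul]
  ring

lemma mul_in_range {T S : Module.End K (ℤ →₀ K)} (hT : T ∈ LinearMap.range (Phi u))
    (hS : S ∈ LinearMap.range (Phi u)) : T * S ∈ LinearMap.range (Phi u) := by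
  obtain ⟨F, rfl⟩ := hT
  obtain ⟨G, rfl⟩ := hS
  exact ⟨starL u F G, (Phi_mul u F G).symm⟩

lemma pow_in_range {T : Module.End K (ℤ →₀ K)} (hT : T ∈ LinearMap.range (Phi u)) (n : ℕ) :
    T ^ n ∈ LinearMap.range (Phi u) := by
  induction n with
  | zero => rw [pow_zero]; exact one_in_range u
  | succ n ih => rw [pow_succ]; exact mul_in_range u ih hT

lemma rep_in_range (hu1 : (u : K) ≠ 1)
    (a : MQWeyl K 1 (fun _ => (u : K)) (fun _ _ => (1:K))) :
    rep u a ∈ LinearMap.range (Phi u) := by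
  obtain ⟨c, rfl⟩ := exists_finsupp (u : K) a
  rw [Finsupp.sum, map_sum]
  refine Submodule.sum_mem _ fun ab _ => ?_
  rw [map_smul, rep_mon]
  exact Submodule.smul_mem _ _
    (mul_in_range u (pow_in_range u (VE_in_range u) ab.1)
      (pow_in_range u (XE_in_range u hu1) ab.2))

end RangeSec

section TopSec

variable (u : Kˣ)

lemma exists_lexTop (F : (ℤ × ℤ) →₀ K) (hF : F ≠ 0) :
    ∃ mt : ℤ × ℤ, mt ∈ F.support ∧ ∀ m ∈ F.support, toLex m ≤ toLex mt := by
  have hne : (F.support.image (toLex : ℤ × ℤ → Lex (ℤ × ℤ))).Nonempty := by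
    rw [Finset.image_nonempty]
    exact Finsupp.support_nonempty_iff.mpr hF
  obtain ⟨m, hm, hms⟩ := Finset.mem_image.mp ((F.support.image _).max'_mem hne)
  refine ⟨m, hm, fun m' hm' => ?_⟩
  rw [hms]
  exact Finset.le_max' _ _ (Finset.mem_image_of_mem _ hm')

lemma lex_add_eq {m m' n n' : ℤ × ℤ} (h1 : toLex m' ≤ toLex m) (h2 : toLex n' ≤ toLex n)
    (h3 : m' + n' = m + n) : m' = m ∧ n' = n := by
  rw [Prod.Lex.toLex_le_toLex] at h1 h2
  have e1 : m'.1 + n'.1 = m.1 + n.1 := congrArg Prod.fst h3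
  have e2 : m'.2 + n'.2 = m.2 + n.2 := congrArg Prod.snd h3
  have hf1 : m'.1 = m.1 ∧ n'.1 = n.1 := by
    rcases h1 with h | h <;> rcases h2 with h' | h' <;> omega
  have hf2 : m'.2 = m.2 ∧ n'.2 = n.2 := by
    rcases h1 with h | h <;> rcases h2 with h' | h' <;>
      first
        | omega
        | (exfalso; omega)
  constructor
  · ext
    · exact hf1.1
    · exact hf2.1
  · ext
    · exact hf1.2
    · exact hf2.2

lemma starL_apply (F G : (ℤ × ℤ) →₀ K) (p : ℤ × ℤ) :
    starL u F G p = ∑ m ∈ F.support, F m * G (p - m) * qz u ((p - m).1 * m.2) := by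
  have h1 : starL u F G = ∑ m ∈ F.support, F m • starAux u m G := by
    rw [show starL u F G = (starL u F) G from rfl]
    rw [starL, Finsupp.lift_apply, Finsupp.sum, LinearMap.coe_sum, Finset.sum_apply]
    rfl
  rw [h1]
  rw [Finsupp.finset_sum_apply]
  refine Finset.sum_congr rfl fun m hm => ?_
  have h2 : starAux u m G = ∑ n ∈ G.support, G n • Finsupp.single (m + n) (qz u (n.1 * m.2)) := by
    rw [starAux, Finsupp.lift_apply, Finsupp.sum]
  have h0' : ∀ n ∈ G.support, n ≠ p - m →
      (G n • Finsupp.single (m + n) (qz u (n.1 * m.2))) p = 0 := by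
    intro n _ hn
    rw [Finsupp.smul_apply, Finsupp.single_apply,
      if_neg (fun h => hn (eq_sub_of_add_eq' h)), smul_zero]
  have h1' : p - m ∉ G.support →
      (G (p - m) • Finsupp.single (m + (p - m)) (qz u ((p - m).1 * m.2))) p = 0 := by
    intro hp
    rw [Finsupp.notMem_support_iff.mp hp, zero_smul, Finsupp.zero_apply]
  rw [Finsupp.smul_apply, h2, Finsupp.finset_sum_apply,
    Finset.sum_eq_single (p - m) h0' h1', Finsupp.smul_apply, Finsupp.single_apply,
    if_pos (by abel), smul_eq_mul, smul_eq_mul]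
  ring

end TopSec


section MainLemmas

variable (u : Kˣ)

lemma starL_top {F G : (ℤ × ℤ) →₀ K} {mt nt : ℤ × ℤ}
    (hmt : mt ∈ F.support) (hmtop : ∀ m ∈ F.support, toLex m ≤ toLex mt)
    (hnt : nt ∈ G.support) (hntop : ∀ n ∈ G.support, toLex n ≤ toLex nt) :
    starL u F G (mt + nt) = F mt * G nt * qz u (nt.1 * mt.2) := by
  rw [starL_apply]
  rw [Finset.sum_eq_single mt]
  · rw [show mt + nt - mt = nt from by abel]
  · intro m hm hne
    by_cases hg : G (mt + nt - m) = 0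
    · rw [hg, mul_zero, zero_mul]
    · exfalso
      have hmem : mt + nt - m ∈ G.support := Finsupp.mem_support_iff.mpr hg
      have := lex_add_eq (hmtop m hm) (hntop _ hmem) (by abel)
      exact hne this.1
  · intro h
    exact absurd hmt h

/-- the `(0,0)`-coefficient of `starL` is a trace. -/
lemma starL_trace (F G : (ℤ × ℤ) →₀ K) :
    starL u F G 0 = starL u G F 0 := by
  have w : ∀ m : ℤ × ℤ, F m * G (0 - m) * qz u ((0 - m).1 * m.2)
      = F m * G (-m) * qz u (-(m.1 * m.2)) := by
    intro m
    rw [zero_sub]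
    congr 2
    · rw [show (-m).1 = -m.1 from rfl]; ring
  rw [starL_apply, starL_apply]
  have hG : ∀ n : ℤ × ℤ, G n * F (0 - n) * qz u ((0 - n).1 * n.2)
      = F (-n) * G (-(-n)) * qz u (-((-n).1 * (-n).2)) := by
    intro n
    rw [zero_sub, neg_neg]
    have : (-((-n).1 * (-n).2)) = -(n.1 * n.2) := by
      rw [show (-n).1 = -n.1 from rfl, show (-n).2 = -n.2 from rfl]; ring
    rw [this, show (-n).1 * n.2 = -(n.1 * n.2) from by rw [show (-n).1 = -n.1 from rfl]; ring]
    ring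
  simp only [w, hG]
  -- now both sides are sums of `w' m := F m * G (-m) * qz u (-(m.1*m.2))`
  rw [show (∑ n ∈ G.support, F (-n) * G (-(-n)) * qz u (-((-n).1 * (-n).2)))
      = ∑ m ∈ G.support.image (fun n : ℤ × ℤ => -n),
        F m * G (-m) * qz u (-(m.1 * m.2)) from ?_]
  · set s := F.support ∪ G.support.image (fun n : ℤ × ℤ => -n) with hs
    rw [Finset.sum_subset (Finset.subset_union_left :
        F.support ⊆ s) ?_, Finset.sum_subset (Finset.subset_union_right :
        G.support.image (fun n : ℤ × ℤ => -n) ⊆ s) ?_]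
    · intro m _ hm
      have : G (-m) = 0 := by
        by_contra hgm
        exact hm (Finset.mem_image.mpr ⟨-m, Finsupp.mem_support_iff.mpr hgm, by abel⟩)
      rw [this, mul_zero, zero_mul]
    · intro m _ hm
      rw [Finsupp.notMem_support_iff.mp hm, zero_mul, zero_mul]
  · rw [Finset.sum_image (by intro a _ b _ h; simpa using h)]

lemma rep_ne_zero (unroot : ∀ m : ℤ, m ≠ 0 → u ^ m ≠ 1)
    {a : MQWeyl K 1 (fun _ => (u : K)) (fun _ _ => (1:K))} (ha : a ≠ 0) :
    rep u a ≠ 0 := fun h => ha (rep_ker u unroot h)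

lemma lambda_lemma (unroot : ∀ m : ℤ, m ≠ 0 → u ^ m ≠ 1)
    {a b : MQWeyl K 1 (fun _ => (u : K)) (fun _ _ => (1:K))} (ha : a ≠ 0) (hb : b ≠ 0)
    {lam : K} (hcom : a * b = lam • (b * a)) : ∃ kk : ℤ, lam = qz u kk := by
  obtain ⟨F, hF⟩ := rep_in_range u (u_ne_one u unroot) a
  obtain ⟨G, hG⟩ := rep_in_range u (u_ne_one u unroot) b
  have hFne : F ≠ 0 := by
    rintro rfl
    rw [map_zero] at hF
    exact rep_ne_zero u unroot ha hF.symm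
  have hGne : G ≠ 0 := by
    rintro rfl
    rw [map_zero] at hG
    exact rep_ne_zero u unroot hb hG.symm
  obtain ⟨mt, hmt, hmtop⟩ := exists_lexTop F hFne
  obtain ⟨nt, hnt, hntop⟩ := exists_lexTop G hGne
  have hz : Phi u (starL u F G - lam • starL u G F) = 0 := by
    rw [map_sub, map_smul, ← Phi_mul, ← Phi_mul, hF, hG, ← map_mul, ← map_mul,
      ← map_smul, ← hcom, sub_self]
  have heq : starL u F G = lam • starL u G F := by
    have := Phi_ker u unroot hz
    rwa [sub_eq_zero] at this
  have hFmt : F mt ≠ 0 := Finsupp.mem_support_iff.mp hmt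
  have hGnt : G nt ≠ 0 := Finsupp.mem_support_iff.mp hnt
  have h1 : F mt * G nt * qz u (nt.1 * mt.2)
      = lam * (G nt * F mt * qz u (mt.1 * nt.2)) := by
    have hp := congrArg (fun H : (ℤ × ℤ) →₀ K => H (mt + nt)) heq
    simp only [Finsupp.smul_apply, smul_eq_mul] at hp
    rw [starL_top u hmt hmtop hnt hntop] at hp
    rw [show mt + nt = nt + mt from by abel, starL_top u hnt hntop hmt hmtop] at hp
    exact hp
  have h2 : lam * qz u (mt.1 * nt.2) = qz u (nt.1 * mt.2) :=
    mul_left_cancel₀ (mul_ne_zero hFmt hGnt) (by linear_combination -h1)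
  refine ⟨nt.1 * mt.2 - mt.1 * nt.2, ?_⟩
  rw [show qz u (nt.1 * mt.2 - mt.1 * nt.2)
      = qz u (nt.1 * mt.2) * (qz u (mt.1 * nt.2))⁻¹ from by simp [qz, zpow_sub],
    ← h2, mul_inv_cancel_right₀ (qz_ne_zero u _)]

end MainLemmas


section KeySec

variable (u : Kˣ)

lemma Phi_single_zero : Phi u (Finsupp.single (0 : ℤ × ℤ) 1) = 1 := by
  rw [show (0 : ℤ × ℤ) = ((0:ℤ), (0:ℤ)) from rfl, Phi_single, one_smul]
  refine endExt fun n c => ?_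
  rw [Module.End.one_apply, eE_single, mul_zero, qz_zero, one_mul, add_zero]

lemma no_commutator_one (unroot : ∀ m : ℤ, m ≠ 0 → u ^ m ≠ 1)
    {a b : MQWeyl K 1 (fun _ => (u : K)) (fun _ _ => (1:K))}
    (h : a * b - b * a = 1) : False := by
  obtain ⟨F, hF⟩ := rep_in_range u (u_ne_one u unroot) a
  obtain ⟨G, hG⟩ := rep_in_range u (u_ne_one u unroot) b
  have hz : Phi u (starL u F G - starL u G F - Finsupp.single (0 : ℤ × ℤ) 1) = 0 := by
    rw [map_sub, map_sub, ← Phi_mul, ← Phi_mul, hF, hG, ← map_mul, ← map_mul,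
      Phi_single_zero, ← map_sub, h, map_one, sub_self]
  have h2 := Phi_ker u unroot hz
  have h3 := congrArg (fun H : (ℤ × ℤ) →₀ K => H 0) h2
  simp only [Finsupp.sub_apply, Finsupp.coe_zero, Pi.zero_apply] at h3
  rw [starL_trace u F G, sub_self, Finsupp.single_eq_same] at h3
  simp at h3

lemma key_lemma (unroot : ∀ m : ℤ, m ≠ 0 → u ^ m ≠ 1) (q' : K) (hq0' : q' ≠ 0)
    (φ : MQWeyl K 1 (fun _ => (u : K)) (fun _ _ => (1:K)) ≃ₐ[K]
      MQWeyl K 1 (fun _ => q') (fun _ _ => (1:K))) :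
    ∃ kk : ℤ, kk ≠ 0 ∧ q' = qz u kk := by
  have hx : xA q' ≠ 0 := xA_ne_zero (Units.mk0 q' hq0')
  have hzz : zA q' ≠ 0 := zA_ne_zero (Units.mk0 q' hq0')
  set a := φ.symm (xA q') with hadef
  set b := φ.symm (zA q') with hbdef
  have ha : a ≠ 0 := by
    intro h
    apply hx
    have := congrArg φ h
    rwa [hadef, AlgEquiv.apply_symm_apply, map_zero] at this
  have hb : b ≠ 0 := by
    intro h
    apply hzz
    have := congrArg φ h
    rwa [hbdef, AlgEquiv.apply_symm_apply, map_zero] at this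
  have hab : a * b = q' • (b * a) := by
    rw [hadef, hbdef, ← map_mul, ← map_mul, ← map_smul, xz_rel]
  obtain ⟨kk, hkk⟩ := lambda_lemma u unroot ha hb hab
  refine ⟨kk, ?_, hkk⟩
  intro h0
  rw [h0, qz_zero] at hkk
  subst hkk
  have hrel := rel1 (1 : K)
  rw [one_smul] at hrel
  have hcomm : φ.symm (xA 1) * φ.symm (yA 1) - φ.symm (yA 1) * φ.symm (xA 1) = 1 := by
    rw [← map_mul, ← map_mul, ← map_sub, hrel, add_sub_cancel_left, map_one]
  exact no_commutator_one u unroot hcomm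

end KeySec


section SwapSec

variable (v : Kˣ)

lemma filter_empty1 (j : Fin 1) : Finset.univ.filter (fun k : Fin 1 => k < j) = ∅ := by
  have : j = 0 := Subsingleton.elim _ _
  simp [this]

lemma yx_eq (p : K) (hp : p ≠ 0) :
    yA p⁻¹ * xA p⁻¹ = p • (xA p⁻¹ * yA p⁻¹) - p • (1 : MQWeyl K 1 (fun _ => p⁻¹) (fun _ _ => (1:K))) := by
  have h := rel1 (p⁻¹ : K)
  have h2 : p • (xA p⁻¹ * yA p⁻¹) = yA p⁻¹ * xA p⁻¹ + p • 1 := by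
    rw [h, smul_add, smul_smul, mul_inv_cancel₀ hp, one_smul]
  rw [h2]
  abel

def swapFAux : FreeAlgebra K (Fin 1 ⊕ Fin 1) →ₐ[K]
    MQWeyl K 1 (fun _ => (v : K)⁻¹) (fun _ _ => (1:K)) :=
  FreeAlgebra.lift K (Sum.elim (fun _ => yA ((v:K)⁻¹)) (fun _ => (-(v:K)⁻¹) • xA ((v:K)⁻¹)))

lemma swapF_rel : ∀ ⦃a b⦄, MQW.rel K 1 (fun _ => (v : K)) (fun _ _ => (1:K)) a b →
    swapFAux v a = swapFAux v b := by
  intro a b r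
  induction r with
  | yy i j => simp [MQW.freeY, swapFAux, map_one]
  | xx i j h => exact absurd (Subsingleton.elim i j ▸ h) (lt_irrefl j)
  | xyLT i j h => exact absurd (Subsingleton.elim i j ▸ h) (lt_irrefl j)
  | xyGT i j h => exact absurd (Subsingleton.elim j i ▸ h) (lt_irrefl i)
  | weyl j =>
      simp only [MQW.freeX, MQW.freeY, map_mul, map_add, map_one, filter_empty1,
        Finset.sum_empty, map_zero, add_zero, swapFAux, FreeAlgebra.lift_ι_apply,
        Sum.elim_inl, Sum.elim_inr, AlgHom.commutes]
      rw [← Algebra.smul_def]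
      rw [mul_smul_comm, smul_mul_assoc, smul_smul, yx_eq (v:K) (Units.ne_zero v),
        smul_sub, smul_smul, smul_smul]
      rw [show (-((v:K))⁻¹) * (v:K) = -1 from by
        rw [neg_mul, inv_mul_cancel₀ (Units.ne_zero v)],
        show (v:K) * (-((v:K))⁻¹) = -1 from by
        rw [mul_neg, mul_inv_cancel₀ (Units.ne_zero v)]]
      module

def swapF : MQWeyl K 1 (fun _ => (v : K)) (fun _ _ => (1:K)) →ₐ[K]
    MQWeyl K 1 (fun _ => (v : K)⁻¹) (fun _ _ => (1:K)) :=
  RingQuot.liftAlgHom K ⟨swapFAux v, swapF_rel v⟩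

def swapBAux : FreeAlgebra K (Fin 1 ⊕ Fin 1) →ₐ[K]
    MQWeyl K 1 (fun _ => (v : K)) (fun _ _ => (1:K)) :=
  FreeAlgebra.lift K (Sum.elim (fun _ => (-(v:K)) • yA ((v:K))) (fun _ => xA ((v:K))))

lemma swapB_rel : ∀ ⦃a b⦄, MQW.rel K 1 (fun _ => (v : K)⁻¹) (fun _ _ => (1:K)) a b →
    swapBAux v a = swapBAux v b := by
  intro a b r
  induction r with
  | yy i j => simp [MQW.freeY, swapBAux, map_one]
  | xx i j h => exact absurd (Subsingleton.elim i j ▸ h) (lt_irrefl j)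
  | xyLT i j h => exact absurd (Subsingleton.elim i j ▸ h) (lt_irrefl j)
  | xyGT i j h => exact absurd (Subsingleton.elim j i ▸ h) (lt_irrefl i)
  | weyl j =>
      simp only [MQW.freeX, MQW.freeY, map_mul, map_add, map_one, filter_empty1,
        Finset.sum_empty, map_zero, add_zero, swapBAux, FreeAlgebra.lift_ι_apply,
        Sum.elim_inl, Sum.elim_inr, AlgHom.commutes]
      rw [← Algebra.smul_def]
      rw [smul_mul_assoc, mul_smul_comm, smul_smul, rel1 (v : K), smul_add, smul_smul]
      rw [show ((v:K))⁻¹ * (-(v:K)) = -1 from by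
        rw [mul_neg, inv_mul_cancel₀ (Units.ne_zero v)],
        show (-1 : K) * (v : K) = -(v:K) from by ring]
      module

def swapB : MQWeyl K 1 (fun _ => (v : K)⁻¹) (fun _ _ => (1:K)) →ₐ[K]
    MQWeyl K 1 (fun _ => (v : K)) (fun _ _ => (1:K)) :=
  RingQuot.liftAlgHom K ⟨swapBAux v, swapB_rel v⟩

lemma swapF_x : swapF v (xA (v : K)) = yA ((v:K)⁻¹) := by
  rw [swapF, xA, MQW.x, MQW.freeX, RingQuot.liftAlgHom_mkAlgHom_apply, swapFAux,
    FreeAlgebra.lift_ι_apply, Sum.elim_inl]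

lemma swapF_y : swapF v (yA (v : K)) = (-(v:K)⁻¹) • xA ((v:K)⁻¹) := by
  rw [swapF, yA, MQW.y, MQW.freeY, RingQuot.liftAlgHom_mkAlgHom_apply, swapFAux,
    FreeAlgebra.lift_ι_apply, Sum.elim_inr]

lemma swapB_x : swapB v (xA ((v:K)⁻¹)) = (-(v:K)) • yA ((v:K)) := by
  rw [swapB, xA, MQW.x, MQW.freeX, RingQuot.liftAlgHom_mkAlgHom_apply, swapBAux,
    FreeAlgebra.lift_ι_apply, Sum.elim_inl]

lemma swapB_y : swapB v (yA ((v:K)⁻¹)) = xA ((v:K)) := by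
  rw [swapB, yA, MQW.y, MQW.freeY, RingQuot.liftAlgHom_mkAlgHom_apply, swapBAux,
    FreeAlgebra.lift_ι_apply, Sum.elim_inr]

lemma swapFB : (swapF v).comp (swapB v) = AlgHom.id K _ := by
  apply RingQuot.ringQuot_ext'
  apply FreeAlgebra.hom_ext
  funext s
  rcases s with i | i
  all_goals have hi : i = 0 := Subsingleton.elim _ _
  all_goals subst hi
  · show (swapF v) ((swapB v) (xA ((v:K)⁻¹))) = xA ((v:K)⁻¹)
    rw [swapB_x, map_smul, swapF_y, smul_smul,
      show (-(v:K)) * (-(v:K)⁻¹) = 1 from by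
        rw [neg_mul_neg, mul_inv_cancel₀ (Units.ne_zero v)], one_smul]
  · show (swapF v) ((swapB v) (yA ((v:K)⁻¹))) = yA ((v:K)⁻¹)
    rw [swapB_y, swapF_x]

lemma swapBF : (swapB v).comp (swapF v) = AlgHom.id K _ := by
  apply RingQuot.ringQuot_ext'
  apply FreeAlgebra.hom_ext
  funext s
  rcases s with i | i
  all_goals have hi : i = 0 := Subsingleton.elim _ _
  all_goals subst hi
  · show (swapB v) ((swapF v) (xA ((v:K)))) = xA ((v:K))
    rw [swapF_x, swapB_y]
  · show (swapB v) ((swapF v) (yA ((v:K)))) = yA ((v:K))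
    rw [swapF_y, map_smul, swapB_x, smul_smul,
      show (-(v:K)⁻¹) * (-(v:K)) = 1 from by
        rw [neg_mul_neg, inv_mul_cancel₀ (Units.ne_zero v)], one_smul]

def swapEquiv : MQWeyl K 1 (fun _ => (v : K)) (fun _ _ => (1:K)) ≃ₐ[K]
    MQWeyl K 1 (fun _ => (v : K)⁻¹) (fun _ _ => (1:K)) :=
  AlgEquiv.ofAlgHom (swapF v) (swapB v) (swapFB v) (swapBF v)

end SwapSec


lemma unroot_of (q : K) (hq0 : q ≠ 0) (hq : ∀ k : ℕ, k ≠ 0 → q ^ k ≠ 1) :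
    ∀ m : ℤ, m ≠ 0 → (Units.mk0 q hq0) ^ m ≠ 1 := by
  intro m hm h
  rcases m with n | n
  · rw [show Int.ofNat n = (n : ℤ) from rfl, zpow_natCast] at h
    refine hq n (by simpa using hm) ?_
    have := congrArg Units.val h
    simpa using this
  · rw [zpow_negSucc, inv_eq_one] at h
    refine hq (n + 1) (by omega) ?_
    have := congrArg Units.val h
    simpa using this

end QWtest

open QWtest in
/-- for `q` not a root of unity, `A_1^q(K) ≅ A_1^{q'}(K)` as `K`-algebras
iff `q' = q` or `q' = q⁻¹`. -/
theorem weyl1_iso_iff (K : Type*) [Field K] (q q' : K) (hq0 : q ≠ 0) (hq0' : q' ≠ 0)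
    (hq : ∀ k : ℕ, k ≠ 0 → q ^ k ≠ 1) :
    Nonempty (MQWeyl K 1 (fun _ => q) (fun _ _ => 1) ≃ₐ[K]
        MQWeyl K 1 (fun _ => q') (fun _ _ => 1)) ↔ (q' = q ∨ q' = q⁻¹) := by
  constructor
  · rintro ⟨φ⟩
    set u : Kˣ := Units.mk0 q hq0 with hu
    have unroot : ∀ m : ℤ, m ≠ 0 → u ^ m ≠ 1 := unroot_of q hq0 hq
    obtain ⟨kk, hkk0, hkk⟩ := key_lemma u unroot q' hq0' φ
    have hu' : Units.mk0 q' hq0' = u ^ kk := Units.ext (by simpa [qz] using hkk)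
    have unroot' : ∀ m : ℤ, m ≠ 0 → (Units.mk0 q' hq0') ^ m ≠ 1 := by
      intro m hm h
      rw [hu', ← zpow_mul] at h
      have h2 := zpow_eq_one_iff u unroot h
      rcases mul_eq_zero.mp h2 with h3 | h3
      · exact hkk0 h3
      · exact hm h3
    obtain ⟨jj, hjj0, hjj⟩ := key_lemma (Units.mk0 q' hq0') unroot' q hq0 φ.symm
    have h3 : u = (Units.mk0 q' hq0') ^ jj := Units.ext (by simpa [qz, hu] using hjj)
    rw [hu', ← zpow_mul] at h3
    have h4 : u ^ (kk * jj - 1) = 1 := by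
      rw [zpow_sub, ← h3, zpow_one, mul_inv_cancel]
    have h5 := zpow_eq_one_iff u unroot h4
    rcases Int.mul_eq_one_iff_eq_one_or_neg_one.mp (show kk * jj = 1 by omega) with ⟨hk1, _⟩ | ⟨hk1, _⟩
    · left
      rw [hkk, hk1]
      simp [qz, hu]
    · right
      rw [hkk, hk1]
      simp [qz, hu]
  · rintro (rfl | rfl)
    · exact ⟨AlgEquiv.refl⟩
    · exact ⟨swapEquiv (Units.mk0 q hq0)⟩
end
end

section
/- In A' = A_n^{Q',Γ'}(K), define x*_i = x'_i, y*_i = λ_i y'_i if ε_i = 1, and x*_i = y'_i, y*_i = −λ_i x'_i if ε_i = −1, where λ_0 = 1 and λ_i = q_i^{(ε_i−1)/2}λ_{i−1}, and suppose q'_i = q_i^{ε_i} and Γ' is related to Γ by the sign rule. Then x*_j y*_j − q_j y*_j x*_j = λ_{j−1} z'_{j−1} for all j ∈ {1,...,n}, where z'_{j−1} = 1 + Σ_{k=1}^{j−1}(q'_k−1)y'_k x'_k. -/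
/-!  Multiparameter quantized Weyl algebras (Maltsiniotis).
Generators: `Sum.inl i ↦ xᵢ`, `Sum.inr i ↦ yᵢ`. -/

noncomputable section

open scoped BigOperators

theorem MQW.weyl_eq (K : Type*) [CommRing K] (n : ℕ) (Q : Fin n → K) (Γ : Fin n → Fin n → K) (j : Fin n) :
    MQW.x K n Q Γ j * MQW.y K n Q Γ j =
      algebraMap K _ (Q j) * (MQW.y K n Q Γ j * MQW.x K n Q Γ j) + MQW.z K n Q Γ (j : ℕ) := by
  have h := RingQuot.mkAlgHom_rel K (MQW.rel.weyl (K := K) (n := n) (Q := Q) (Γ := Γ) j)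
  simp only [map_mul, map_add, map_sum, map_one, AlgHom.commutes] at h
  rw [MQW.x, MQW.y, h, MQW.z]
  simp only [MQW.x, MQW.y, Fin.lt_def]
  rw [add_assoc]
/-- with `x*ᵢ, y*ᵢ` defined from the sign vector `ε` and
`λᵢ = qᵢ^{(εᵢ-1)/2} λ_{i-1}`, `λ₀ = 1`, one has
`x*ⱼ y*ⱼ - qⱼ y*ⱼ x*ⱼ = λ_{j-1} z'_{j-1}` in `A' = A_n^{Q',Γ'}(K)`. -/
theorem mqw_star_relation (K : Type*) [Field K] (n : ℕ)
    (Q Q' : Fin n → K) (Γ Γ' : Fin n → Fin n → K)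
    (hQ : ∀ i, Q i ≠ 0) (hQ' : ∀ i, Q' i ≠ 0)
    (hΓ : ∀ i j, Γ i j * Γ j i = 1) (hΓd : ∀ i, Γ i i = 1)
    (hΓ' : ∀ i j, Γ' i j * Γ' j i = 1) (hΓd' : ∀ i, Γ' i i = 1)
    (ε : Fin n → ℤˣ)
    (hQQ' : ∀ i : Fin n, Q' i = Q i ^ (ε i : ℤ))
    (hΓΓ' : ∀ i j : Fin n, i < j →
      (ε i = 1 → ε j = 1 → Γ' i j = Γ i j) ∧
      (ε i = -1 → ε j = 1 → Γ' i j = Γ j i) ∧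
      (ε i = 1 → ε j = -1 → Γ' i j = (Q i)⁻¹ * Γ j i) ∧
      (ε i = -1 → ε j = -1 → Γ' i j = Q i * Γ i j))
    (lam : ℕ → K)
    (hlam : ∀ m : ℕ, lam m =
      ∏ k ∈ Finset.univ.filter (fun k : Fin n => (k : ℕ) < m), Q k ^ (((ε k : ℤ) - 1) / 2))
    (xs ys : Fin n → MQWeyl K n Q' Γ')
    (hstar : ∀ i : Fin n,
      (ε i = 1 → xs i = MQW.x K n Q' Γ' i ∧ ys i = lam ((i : ℕ) + 1) • MQW.y K n Q' Γ' i) ∧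
      (ε i = -1 → xs i = MQW.y K n Q' Γ' i ∧ ys i = -(lam ((i : ℕ) + 1)) • MQW.x K n Q' Γ' i)) :
    ∀ j : Fin n,
      xs j * ys j - algebraMap K (MQWeyl K n Q' Γ') (Q j) * (ys j * xs j) =
        algebraMap K (MQWeyl K n Q' Γ') (lam (j : ℕ)) * MQW.z K n Q' Γ' (j : ℕ) := by
  intro j
  have hw := MQW.weyl_eq K n Q' Γ' j
  have hstep : lam ((j : ℕ) + 1) = lam (j : ℕ) * Q j ^ (((ε j : ℤ) - 1) / 2) := by
    rw [hlam, hlam,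
      show (Finset.univ.filter (fun k : Fin n => (k : ℕ) < (j : ℕ) + 1)) =
        insert j (Finset.univ.filter (fun k : Fin n => (k : ℕ) < (j : ℕ))) by
          ext k; simp [Nat.lt_succ_iff_lt_or_eq, Fin.ext_iff, or_comm]; rw [le_iff_eq_or_lt, Fin.ext_iff],
      Finset.prod_insert (by simp)]
    ring
  rcases Int.units_eq_one_or (ε j) with hε | hε
  · obtain ⟨hx, hy⟩ := (hstar j).1 hε
    have hq : Q' j = Q j := by rw [hQQ' j, hε]; simp
    have hl : lam ((j : ℕ) + 1) = lam (j : ℕ) := by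
      rw [hstep, hε]; norm_num
    have hw' : MQW.x K n Q' Γ' j * MQW.y K n Q' Γ' j -
        algebraMap K (MQWeyl K n Q' Γ') (Q j) * (MQW.y K n Q' Γ' j * MQW.x K n Q' Γ' j) =
        MQW.z K n Q' Γ' (j : ℕ) := by
      rw [hw, hq, add_sub_cancel_left]
    rw [hx, hy, hl, mul_smul_comm, smul_mul_assoc, mul_smul_comm, Algebra.smul_def,
      Algebra.smul_def, ← mul_sub, hw']
  · obtain ⟨hx, hy⟩ := (hstar j).2 hε
    have hq : Q' j = (Q j)⁻¹ := by rw [hQQ' j, hε]; simp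
    have hlj : lam (j : ℕ) = lam ((j : ℕ) + 1) * Q j := by
      rw [hstep, hε]
      norm_num
      rw [mul_assoc, inv_mul_cancel₀ (hQ j), mul_one]
    have key : algebraMap K (MQWeyl K n Q' Γ') (Q j) *
        (MQW.x K n Q' Γ' j * MQW.y K n Q' Γ' j) - MQW.y K n Q' Γ' j * MQW.x K n Q' Γ' j =
        algebraMap K (MQWeyl K n Q' Γ') (Q j) * MQW.z K n Q' Γ' (j : ℕ) := by
      rw [hw, hq, mul_add, ← mul_assoc, ← map_mul, mul_inv_cancel₀ (hQ j), map_one, one_mul,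
        add_sub_cancel_left]
    rw [hx, hy, mul_smul_comm, smul_mul_assoc, mul_smul_comm, Algebra.smul_def,
      Algebra.smul_def, ← mul_sub, map_neg]
    rw [show MQW.y K n Q' Γ' j * MQW.x K n Q' Γ' j -
        algebraMap K (MQWeyl K n Q' Γ') (Q j) * (MQW.x K n Q' Γ' j * MQW.y K n Q' Γ' j) =
        -(algebraMap K (MQWeyl K n Q' Γ') (Q j) * (MQW.x K n Q' Γ' j * MQW.y K n Q' Γ' j) -
          MQW.y K n Q' Γ' j * MQW.x K n Q' Γ' j) from (neg_sub _ _).symm, key]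
    have fin : algebraMap K (MQWeyl K n Q' Γ') (lam ((j : ℕ) + 1)) *
        (algebraMap K (MQWeyl K n Q' Γ') (Q j) * MQW.z K n Q' Γ' (j : ℕ)) =
        algebraMap K (MQWeyl K n Q' Γ') (lam (j : ℕ)) * MQW.z K n Q' Γ' (j : ℕ) := by
      rw [← mul_assoc, ← map_mul, ← hlj]
    exact (neg_mul_neg _ _).trans fin
end
end
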